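/- On R^4, define P with nonzero entries P^{12} = p12 e^{x4}, P^{14} = p14 e^{x4}, P^{23} = p23, and P' with nonzero entries P'^{12} = e^{x4}(p'_{12} + a23 x3 + a24 x4 + a33 x3 x4), P'^{13} = a33 e^{x4} x3, P'^{14} = a33 e^{x4} x4, P'^{23} = a53 x3 + (a33 p23/p14) x4, with real constants and p14 ≠ 0. Then [P,P] = 0, [P',P'] = 0, and [P,P'] = 0 identically, so P and P' are compatible Poisson structures. -/

import Mathlib

open scoped BigOperators

noncomputable def pd {m : ℕ} (μ : Fin m) (f : (Fin m → ℝ) → ℝ) (x : Fin m → ℝ) : ℝ :=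
  fderiv ℝ f x (Pi.single μ 1)

/-- Poisson bracket associated to a bivector field `P`. -/
noncomputable def pbrk {m : ℕ} (P : (Fin m → ℝ) → Fin m → Fin m → ℝ)
    (f g : (Fin m → ℝ) → ℝ) (x : Fin m → ℝ) : ℝ :=
  ∑ μ, ∑ ν, P x μ ν * pd μ f x * pd ν g x

/-- Schouten bracket `[P,P]^{λμν}`. -/
noncomputable def schouten {m : ℕ} (P : (Fin m → ℝ) → Fin m → Fin m → ℝ)
    (l μ ν : Fin m) (x : Fin m → ℝ) : ℝ :=
  ∑ ρ, (P x ρ l * pd ρ (fun y => P y μ ν) x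
      + P x ρ ν * pd ρ (fun y => P y l μ) x
      + P x ρ μ * pd ρ (fun y => P y ν l) x)

/-- Mixed Schouten bracket `[P,Q]^{λμν}`. -/
noncomputable def schoutenMixed {m : ℕ} (P Q : (Fin m → ℝ) → Fin m → Fin m → ℝ)
    (l μ ν : Fin m) (x : Fin m → ℝ) : ℝ :=
  ∑ ρ, (P x ρ l * pd ρ (fun y => Q y μ ν) x + Q x ρ l * pd ρ (fun y => P y μ ν) x
      + P x ρ ν * pd ρ (fun y => Q y l μ) x + Q x ρ ν * pd ρ (fun y => P y l μ) x
      + P x ρ μ * pd ρ (fun y => Q y ν l) x + Q x ρ μ * pd ρ (fun y => P y ν l) x)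

/-- The Poisson bivector `P` on the group `A_{4,3}`. -/
noncomputable def P43 (p12 p14 p23 : ℝ) : (Fin 4 → ℝ) → Fin 4 → Fin 4 → ℝ :=
  fun x μ ν =>
    let A := p12 * Real.exp (x 3)
    let B := p14 * Real.exp (x 3)
    !![0, A, 0, B;
       -A, 0, p23, 0;
       0, -p23, 0, 0;
       -B, 0, 0, 0] μ ν

/-- The Poisson bivector `P'` on the group `A_{4,3}`. -/
noncomputable def P43' (p14 p23 p12' a23 a24 a33 a53 : ℝ) :
    (Fin 4 → ℝ) → Fin 4 → Fin 4 → ℝ :=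
  fun x μ ν =>
    let A := Real.exp (x 3) * (p12' + a23 * x 2 + a24 * x 3 + a33 * x 2 * x 3)
    let B := a33 * Real.exp (x 3) * x 2
    let C := a33 * Real.exp (x 3) * x 3
    let D := a53 * x 2 + a33 * p23 / p14 * x 3
    !![0, A, B, C;
       -A, 0, D, 0;
       -B, -D, 0, 0;
       -C, 0, 0, 0] μ ν


section Helpers

lemma finmk0 (h : 0 < 4) : (⟨0, h⟩ : Fin 4) = 0 := rfl
lemma finmk1 (h : 1 < 4) : (⟨1, h⟩ : Fin 4) = 1 := rfl
lemma finmk2 (h : 2 < 4) : (⟨2, h⟩ : Fin 4) = 2 := rfl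
lemma finmk3 (h : 3 < 4) : (⟨3, h⟩ : Fin 4) = 3 := rfl

lemma coordD (i : Fin 4) (x : Fin 4 → ℝ) : HasFDerivAt (fun y : Fin 4 → ℝ => y i)
    (ContinuousLinearMap.proj (R := ℝ) (φ := fun _ : Fin 4 => ℝ) i) x :=
  hasFDerivAt_apply i x

lemma pd_const (c : ℝ) (ρ : Fin 4) (x : Fin 4 → ℝ) : pd ρ (fun _ => c) x = 0 := by
  simp [pd]

lemma pd_neg (f : (Fin 4 → ℝ) → ℝ) (ρ : Fin 4) (x : Fin 4 → ℝ) :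
    pd ρ (fun y => -(f y)) x = -(pd ρ f x) := by
  simp [pd, fderiv_neg]

lemma pd_exp3 (c : ℝ) (ρ : Fin 4) (x : Fin 4 → ℝ) :
    pd ρ (fun y => c * Real.exp (y 3)) x = if ρ = 3 then c * Real.exp (x 3) else 0 := by
  have h := ((coordD 3 x).exp).const_mul c
  rw [pd, h.fderiv]
  fin_cases ρ <;> simp [Pi.single_apply]

lemma pd_E1 (p12' a23 a24 a33 : ℝ) (ρ : Fin 4) (x : Fin 4 → ℝ) :
    pd ρ (fun y => Real.exp (y 3) * (p12' + a23 * y 2 + a24 * y 3 + a33 * y 2 * y 3)) x =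
      (if ρ = 2 then Real.exp (x 3) * (a23 + a33 * x 3) else 0) +
      (if ρ = 3 then Real.exp (x 3) * (p12' + a23 * x 2 + a24 * x 3 + a33 * x 2 * x 3)
          + Real.exp (x 3) * (a24 + a33 * x 2) else 0) := by
  have h2 := coordD 2 x
  have h3 := coordD 3 x
  have h : HasFDerivAt (fun y : Fin 4 → ℝ => Real.exp (y 3) * (p12' + a23 * y 2 + a24 * y 3 + a33 * y 2 * y 3)) _ x := (h3.exp).mul
    ((((hasFDerivAt_const p12' x).add (h2.const_mul a23)).add (h3.const_mul a24)).add
      ((h2.const_mul a33).mul h3))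
  rw [pd, h.fderiv]
  fin_cases ρ <;> simp [Pi.single_apply] <;> ring

lemma pd_E2 (a33 : ℝ) (ρ : Fin 4) (x : Fin 4 → ℝ) :
    pd ρ (fun y => a33 * Real.exp (y 3) * y 2) x =
      (if ρ = 2 then a33 * Real.exp (x 3) else 0) +
      (if ρ = 3 then a33 * Real.exp (x 3) * x 2 else 0) := by
  have h : HasFDerivAt (fun y : Fin 4 → ℝ => a33 * Real.exp (y 3) * y 2) _ x := (((coordD 3 x).exp.const_mul a33).mul (coordD 2 x))
  rw [pd, h.fderiv]
  fin_cases ρ <;> simp [Pi.single_apply] <;> ring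

lemma pd_E3 (a33 : ℝ) (ρ : Fin 4) (x : Fin 4 → ℝ) :
    pd ρ (fun y => a33 * Real.exp (y 3) * y 3) x =
      (if ρ = 3 then a33 * Real.exp (x 3) * x 3 + a33 * Real.exp (x 3) else 0) := by
  have h : HasFDerivAt (fun y : Fin 4 → ℝ => a33 * Real.exp (y 3) * y 3) _ x := (((coordD 3 x).exp.const_mul a33).mul (coordD 3 x))
  rw [pd, h.fderiv]
  fin_cases ρ <;> simp [Pi.single_apply] <;> ring

lemma pd_E4 (a53 k : ℝ) (ρ : Fin 4) (x : Fin 4 → ℝ) :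
    pd ρ (fun y => a53 * y 2 + k * y 3) x =
      (if ρ = 2 then a53 else 0) + (if ρ = 3 then k else 0) := by
  have h : HasFDerivAt (fun y : Fin 4 → ℝ => a53 * y 2 + k * y 3) _ x := ((coordD 2 x).const_mul a53).add ((coordD 3 x).const_mul k)
  rw [pd, h.fderiv]
  fin_cases ρ <;> simp [Pi.single_apply]

set_option maxHeartbeats 2000000 in
lemma pd_P43 (p12 p14 p23 : ℝ) (ρ μ ν : Fin 4) (x : Fin 4 → ℝ) :
    pd ρ (fun y => P43 p12 p14 p23 y μ ν) x =
      if ρ = 3 then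
        !![0, p12 * Real.exp (x 3), 0, p14 * Real.exp (x 3);
           -(p12 * Real.exp (x 3)), 0, 0, 0;
           0, 0, 0, 0;
           -(p14 * Real.exp (x 3)), 0, 0, 0] μ ν else 0 := by
  fin_cases μ <;> fin_cases ν <;>
    simp only [P43, Matrix.cons_val', Matrix.cons_val_zero, Matrix.cons_val_one,
      Matrix.head_cons, Matrix.empty_val', Matrix.cons_val_fin_one, Matrix.head_fin_const,
      Matrix.cons_val_two, Matrix.tail_cons, Matrix.cons_val_three, Fin.isValue,
      Matrix.vecHead, Matrix.vecTail, Function.comp, Matrix.of_apply, Matrix.cons_val_succ,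
      finmk0, finmk1, finmk2, finmk3] <;>
    (try simp only [pd_neg, pd_exp3, pd_const]) <;>
    split_ifs <;> simp

set_option maxHeartbeats 2000000 in
lemma pd_P43' (p14 p23 p12' a23 a24 a33 a53 : ℝ) (ρ μ ν : Fin 4) (x : Fin 4 → ℝ) :
    pd ρ (fun y => P43' p14 p23 p12' a23 a24 a33 a53 y μ ν) x =
      (if ρ = 2 then
        !![0, Real.exp (x 3) * (a23 + a33 * x 3), a33 * Real.exp (x 3), 0;
           -(Real.exp (x 3) * (a23 + a33 * x 3)), 0, a53, 0;
           -(a33 * Real.exp (x 3)), -a53, 0, 0;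
           0, 0, 0, 0] μ ν else 0) +
      (if ρ = 3 then
        !![0, Real.exp (x 3) * (p12' + a23 * x 2 + a24 * x 3 + a33 * x 2 * x 3)
              + Real.exp (x 3) * (a24 + a33 * x 2),
           a33 * Real.exp (x 3) * x 2, a33 * Real.exp (x 3) * x 3 + a33 * Real.exp (x 3);
           -(Real.exp (x 3) * (p12' + a23 * x 2 + a24 * x 3 + a33 * x 2 * x 3)
              + Real.exp (x 3) * (a24 + a33 * x 2)), 0, a33 * p23 / p14, 0;
           -(a33 * Real.exp (x 3) * x 2), -(a33 * p23 / p14), 0, 0;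
           -(a33 * Real.exp (x 3) * x 3 + a33 * Real.exp (x 3)), 0, 0, 0] μ ν else 0) := by
  fin_cases μ <;> fin_cases ν
  all_goals
    simp only [P43', Matrix.cons_val', Matrix.cons_val_zero, Matrix.cons_val_one,
      Matrix.head_cons, Matrix.empty_val', Matrix.cons_val_fin_one, Matrix.head_fin_const,
      Matrix.cons_val_two, Matrix.tail_cons, Matrix.cons_val_three, Fin.isValue,
      Matrix.vecHead, Matrix.vecTail, Function.comp, Matrix.of_apply, Matrix.cons_val_succ,
      finmk0, finmk1, finmk2, finmk3]
    try simp only [pd_neg, pd_E1, pd_E2, pd_E3, pd_E4, pd_const]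
    try (split_ifs <;> simp <;> try ring)

end Helpers

set_option maxHeartbeats 4000000 in
theorem A43_compatible (p12 p14 p23 p12' a23 a24 a33 a53 : ℝ) (h14 : p14 ≠ 0) :
    (∀ x l μ ν, schouten (P43 p12 p14 p23) l μ ν x = 0) ∧
    (∀ x l μ ν, schouten (P43' p14 p23 p12' a23 a24 a33 a53) l μ ν x = 0) ∧
    (∀ x l μ ν, schoutenMixed (P43 p12 p14 p23)
        (P43' p14 p23 p12' a23 a24 a33 a53) l μ ν x = 0) := by
  refine ⟨fun x l μ ν => ?_, fun x l μ ν => ?_, fun x l μ ν => ?_⟩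
  · simp only [schouten, Fin.sum_univ_four, pd_P43]
    fin_cases l <;> fin_cases μ <;> fin_cases ν
    all_goals
      simp [P43, Matrix.vecHead, Matrix.vecTail, finmk0, finmk1, finmk2, finmk3]
      try ring
  · simp only [schouten, Fin.sum_univ_four, pd_P43']
    fin_cases l <;> fin_cases μ <;> fin_cases ν
    all_goals
      simp [P43', Matrix.vecHead, Matrix.vecTail, finmk0, finmk1, finmk2, finmk3]
      try field_simp
      try ring
  · simp only [schoutenMixed, Fin.sum_univ_four, pd_P43, pd_P43']
    fin_cases l <;> fin_cases μ <;> fin_cases ν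
    all_goals
      simp [P43, P43', Matrix.vecHead, Matrix.vecTail, finmk0, finmk1, finmk2, finmk3]
      try field_simp
      try ring
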